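/- For every t > 0, the correlation coefficient r of the distribution F_t equals 15/4 − 6·ln 2; that is, 6·∫_{0}^{∞}∫_{0}^{∞} (F_t(x,y) − (1 − e^{−x})·(1 − (1+y)^{−t}))·f_t(x,y) dx dy = 15/4 − 6·ln 2. In particular r is free of the parameter t. -/

import Mathlib

open MeasureTheory Real Set Filter Topology


lemma xexp_hasDeriv (b : ℝ) (hb : 0 < b) (x : ℝ) :
    HasDerivAt (fun x : ℝ => -((x / b) + 1 / b ^ 2) * Real.exp (-(b * x)))
      (x * Real.exp (-(b * x))) x := by
  have h1 : HasDerivAt (fun x : ℝ => -((x / b) + 1 / b ^ 2)) (-(1 / b)) x := by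
    exact (((hasDerivAt_id x).div_const b).add_const (1 / b ^ 2)).neg
  have h2 : HasDerivAt (fun x : ℝ => Real.exp (-(b * x))) (Real.exp (-(b * x)) * (-b)) x := by
    have h : HasDerivAt (fun x : ℝ => -(b * x)) (-b) x := by
      simpa using ((hasDerivAt_id x).const_mul b).fun_neg
    exact h.exp
  have h3 := h1.mul h2
  refine (h1.fun_mul h2).congr_deriv ?_
  field_simp
  ring

lemma xexp_tendsto (b : ℝ) (hb : 0 < b) :
    Tendsto (fun x : ℝ => -((x / b) + 1 / b ^ 2) * Real.exp (-(b * x))) atTop (𝓝 0) := by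
  have h1 : Tendsto (fun x : ℝ => b * x) atTop atTop :=
    (tendsto_id.const_mul_atTop hb)
  have h2 : Tendsto (fun x : ℝ => (b * x) * Real.exp (-(b * x))) atTop (𝓝 0) := by
    have := (tendsto_pow_mul_exp_neg_atTop_nhds_zero 1).comp h1
    simpa [Function.comp_def] using this
  have h3 : Tendsto (fun x : ℝ => Real.exp (-(b * x))) atTop (𝓝 0) :=
    tendsto_exp_neg_atTop_nhds_zero.comp h1
  have : Tendsto (fun x : ℝ => -(1 / b ^ 2) * ((b * x) * Real.exp (-(b * x)))
      + (-(1 / b ^ 2)) * Real.exp (-(b * x))) atTop (𝓝 (-(1 / b ^ 2) * 0 + (-(1 / b ^ 2)) * 0)) :=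
    ((h2.const_mul _).add (h3.const_mul _))
  norm_num at this
  refine this.congr fun x => ?_
  field_simp
  ring

lemma xexp_integrableOn (b : ℝ) (hb : 0 < b) :
    IntegrableOn (fun x : ℝ => x * Real.exp (-(b * x))) (Ioi 0) := by
  refine integrableOn_Ioi_deriv_of_nonneg
    ((xexp_hasDeriv b hb 0).continuousAt.continuousWithinAt)
    (fun x _ => xexp_hasDeriv b hb x) (fun x hx => mul_nonneg (le_of_lt hx) (Real.exp_pos _).le) (xexp_tendsto b hb)

lemma xexp_integral (b : ℝ) (hb : 0 < b) :
    ∫ x in Ioi (0 : ℝ), x * Real.exp (-(b * x)) = 1 / b ^ 2 := by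
  have := integral_Ioi_of_hasDerivAt_of_tendsto
    ((xexp_hasDeriv b hb 0).continuousAt.continuousWithinAt)
    (fun x _ => xexp_hasDeriv b hb x) (xexp_integrableOn b hb) (xexp_tendsto b hb)
  simpa using this


noncomputable def phi : ℝ → ℝ := fun u => -(1/(8*u^2)) - Real.log u + Real.log (u+1) - 1/(u+1)

noncomputable def psi (t : ℝ) : ℝ → ℝ := fun y =>
  (t * (1+y)^(t-1) * (1+y)^(-t)) * (1/(2*(1+y)^t)^2 - 1/((1+y)^t+1)^2)

lemma phi_hasDeriv (u : ℝ) (hu : 0 < u) :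
    HasDerivAt phi (1/(4*u^3) - 1/u + 1/(u+1) + 1/(u+1)^2) u := by
  have hne : u ≠ 0 := hu.ne'
  have hne1 : u + 1 ≠ 0 := by positivity
  have h1 : HasDerivAt (fun u : ℝ => 1/(8*u^2))
      ((0 * (8*u^2) - 1 * (8*(2*u^1))) / (8*u^2)^2) u :=
    (hasDerivAt_const u 1).div ((hasDerivAt_pow 2 u).const_mul 8) (by positivity)
  have h2 : HasDerivAt Real.log u⁻¹ u := Real.hasDerivAt_log hne
  have h3 : HasDerivAt (fun u : ℝ => Real.log (u+1)) (1/(u+1)) u := by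
    simpa using ((hasDerivAt_id u).add_const 1).log hne1
  have h4 : HasDerivAt (fun u : ℝ => 1/(u+1))
      ((0 * (u+1) - 1 * 1) / (u+1)^2) u :=
    (hasDerivAt_const u 1).div ((hasDerivAt_id u).add_const 1) hne1
  have H := ((h1.neg.sub h2).add h3).sub h4
  refine H.congr_deriv ?_
  field_simp
  ring

lemma phi_tendsto : Tendsto phi atTop (𝓝 0) := by
  have t1 : Tendsto (fun u : ℝ => 1/(8*u^2)) atTop (𝓝 0) := by
    have h : Tendsto (fun u : ℝ => 8*u^2) atTop atTop :=
      (tendsto_pow_atTop (two_ne_zero)).const_mul_atTop (by norm_num)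
    refine (tendsto_inv_atTop_zero.comp h).congr fun u => ?_
    simp [Function.comp, one_div]
  have t2 : Tendsto (fun u : ℝ => Real.log (u+1) - Real.log u) atTop (𝓝 0) := by
    have hlim : Tendsto (fun u : ℝ => 1 + 1/u) atTop (𝓝 1) := by
      have := tendsto_inv_atTop_zero (𝕜 := ℝ)
      have h2 := this.const_add (1 : ℝ)
      simpa [one_div] using h2
    have hlog : Tendsto (fun u : ℝ => Real.log (1 + 1/u)) atTop (𝓝 0) := by
      have := (Real.continuousAt_log one_ne_zero).tendsto.comp hlim
      simpa [Function.comp_def] using this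
    refine hlog.congr' ?_
    filter_upwards [eventually_gt_atTop (0:ℝ)] with u hu
    rw [show (1 : ℝ) + 1/u = (u+1)/u by field_simp, Real.log_div (by positivity) hu.ne']
  have t3 : Tendsto (fun u : ℝ => 1/(u+1)) atTop (𝓝 0) := by
    have h : Tendsto (fun u : ℝ => u + 1) atTop atTop :=
      tendsto_atTop_add_const_right _ 1 tendsto_id
    refine (tendsto_inv_atTop_zero.comp h).congr fun u => ?_
    simp [Function.comp, one_div]
  have H := ((t1.neg.add t2).sub t3)
  norm_num at H
  refine H.congr fun u => ?_
  simp [phi]; ring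

lemma Phi_hasDeriv (t : ℝ) (ht : 0 < t) (y : ℝ) (hy : 0 ≤ y) :
    HasDerivAt (fun y => phi ((1+y)^t)) (psi t y) y := by
  have h1y : (0:ℝ) < 1 + y := by linarith
  have hu : (0:ℝ) < (1+y)^t := Real.rpow_pos_of_pos h1y t
  have hderu : HasDerivAt (fun y : ℝ => (1+y)^t) (t*(1+y)^(t-1)) y := by
    have h := Real.hasDerivAt_rpow_const (x := 1+y) (p := t) (Or.inl h1y.ne')
    have h2 : HasDerivAt (fun y : ℝ => 1 + y) 1 y := (hasDerivAt_id y).const_add 1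
    simpa [Function.comp_def] using h.comp y h2
  have H := (phi_hasDeriv _ hu).comp y hderu
  have heq : psi t y =
      (1/(4*((1+y)^t)^3) - 1/((1+y)^t) + 1/((1+y)^t+1) + 1/((1+y)^t+1)^2) * (t*(1+y)^(t-1)) := by
    have hne : ((1+y):ℝ)^t ≠ 0 := hu.ne'
    have hne1 : ((1+y):ℝ)^t + 1 ≠ 0 := by positivity
    rw [psi, Real.rpow_neg h1y.le]
    field_simp
    ring
  rw [heq]
  exact H

lemma Phi_tendsto (t : ℝ) (ht : 0 < t) :
    Tendsto (fun y => phi ((1+y)^t)) atTop (𝓝 0) := by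
  have h1 : Tendsto (fun y : ℝ => 1 + y) atTop atTop :=
    tendsto_atTop_add_const_left _ 1 tendsto_id
  exact phi_tendsto.comp ((tendsto_rpow_atTop ht).comp h1)

lemma psi_nonpos (t : ℝ) (ht : 0 < t) (y : ℝ) (hy : 0 < y) : 0 ≤ -psi t y := by
  have h1y : (0:ℝ) < 1 + y := by linarith
  have hu : (1:ℝ) ≤ (1+y)^t := Real.one_le_rpow (by linarith) ht.le
  have hub : (0:ℝ) < (1+y)^t := by linarith
  have hC : (0:ℝ) ≤ t * (1+y)^(t-1) * (1+y)^(-t) := by positivity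
  have hsub : 1/(2*(1+y)^t)^2 - 1/((1+y)^t+1)^2 ≤ 0 := by
    have h2 : ((1+y)^t+1)^2 ≤ (2*(1+y)^t)^2 := by nlinarith
    have := one_div_le_one_div_of_le (by positivity) h2
    linarith
  have := mul_nonpos_of_nonneg_of_nonpos hC hsub
  simpa [psi] using neg_nonneg.mpr this

lemma psi_intOn (t : ℝ) (ht : 0 < t) : IntegrableOn (fun y => -psi t y) (Ioi (0:ℝ)) :=
  integrableOn_Ioi_deriv_of_nonneg
    ((Phi_hasDeriv t ht 0 le_rfl).neg.continuousAt.continuousWithinAt)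
    (fun y hy => (Phi_hasDeriv t ht y (le_of_lt hy)).neg)
    (fun y hy => psi_nonpos t ht y hy)
    (by simpa [Pi.neg_def] using (Phi_tendsto t ht).neg)

lemma psi_integral (t : ℝ) (ht : 0 < t) :
    ∫ y in Ioi (0:ℝ), psi t y = 5/8 - Real.log 2 := by
  have H := integral_Ioi_of_hasDerivAt_of_tendsto
    ((Phi_hasDeriv t ht 0 le_rfl).neg.continuousAt.continuousWithinAt)
    (fun y hy => (Phi_hasDeriv t ht y (le_of_lt hy)).neg)
    (psi_intOn t ht)
    (by simpa [Pi.neg_def] using (Phi_tendsto t ht).neg)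
  rw [integral_neg] at H
  have hphi1 : phi ((1+(0:ℝ))^t) = Real.log 2 - 5/8 := by
    norm_num [phi, Real.one_rpow, Real.log_one]
    ring
  simp only [Pi.neg_apply] at H
  rw [hphi1] at H
  linarith


noncomputable def gfun (t : ℝ) : ℝ × ℝ → ℝ := fun p =>
  (t * (1+p.2)^(t-1) * (1+p.2)^(-t)) *
    (p.1 * Real.exp (-((2*(1+p.2)^t) * p.1)) - p.1 * Real.exp (-(((1+p.2)^t+1) * p.1)))


lemma gfun_measurable (t : ℝ) : Measurable (gfun t) := by
  unfold gfun; fun_prop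

lemma gfun_intOn_x (t : ℝ) (ht : 0 < t) (y : ℝ) (hy : 0 < y) :
    IntegrableOn (fun x => gfun t (x, y)) (Ioi (0:ℝ)) := by
  have h1y : (0:ℝ) < 1 + y := by linarith
  have hb1 : (0:ℝ) < 2*(1+y)^t := by positivity
  have hb2 : (0:ℝ) < (1+y)^t + 1 := by positivity
  have h := ((xexp_integrableOn _ hb1).sub (xexp_integrableOn _ hb2)).const_mul
    (t * (1+y)^(t-1) * (1+y)^(-t))
  unfold gfun
  exact h

lemma gfun_inner (t : ℝ) (ht : 0 < t) (y : ℝ) (hy : 0 < y) :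
    ∫ x in Ioi (0:ℝ), gfun t (x, y) = psi t y := by
  have h1y : (0:ℝ) < 1 + y := by linarith
  have hb1 : (0:ℝ) < 2*(1+y)^t := by positivity
  have hb2 : (0:ℝ) < (1+y)^t + 1 := by positivity
  dsimp only [gfun]
  rw [integral_const_mul, integral_sub (xexp_integrableOn _ hb1) (xexp_integrableOn _ hb2),
    xexp_integral _ hb1, xexp_integral _ hb2]
  rfl

lemma gfun_nonpos (t : ℝ) (ht : 0 < t) (x y : ℝ) (hx : 0 < x) (hy : 0 < y) :
    gfun t (x, y) ≤ 0 := by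
  have h1y : (0:ℝ) < 1 + y := by linarith
  have hu : (1:ℝ) ≤ (1+y)^t := Real.one_le_rpow (by linarith) ht.le
  have hC : (0:ℝ) ≤ t * (1+y)^(t-1) * (1+y)^(-t) := by positivity
  refine mul_nonpos_of_nonneg_of_nonpos hC ?_
  have hle : ((1+y)^t + 1) * x ≤ (2*(1+y)^t) * x := by nlinarith
  have := Real.exp_le_exp.mpr (neg_le_neg hle)
  nlinarith [Real.exp_pos (-((2*(1+y)^t) * x))]

lemma gfun_norm_inner (t : ℝ) (ht : 0 < t) (y : ℝ) (hy : 0 < y) :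
    ∫ x in Ioi (0:ℝ), ‖gfun t (x, y)‖ = -psi t y := by
  have h : ∫ x in Ioi (0:ℝ), ‖gfun t (x, y)‖ = ∫ x in Ioi (0:ℝ), -gfun t (x, y) := by
    refine setIntegral_congr_fun measurableSet_Ioi fun x hx => ?_
    rw [Real.norm_eq_abs, abs_of_nonpos (gfun_nonpos t ht x y hx hy)]
  rw [h, integral_neg, gfun_inner t ht y hy]

lemma gfun_integrable (t : ℝ) (ht : 0 < t) :
    Integrable (gfun t)
      ((volume.restrict (Ioi (0:ℝ))).prod (volume.restrict (Ioi (0:ℝ)))) := by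
  rw [integrable_prod_iff' (gfun_measurable t).aestronglyMeasurable]
  constructor
  · filter_upwards [ae_restrict_mem measurableSet_Ioi] with y hy
    exact gfun_intOn_x t ht y hy
  · refine (psi_intOn t ht).congr ?_
    filter_upwards [ae_restrict_mem measurableSet_Ioi] with y hy
    exact (gfun_norm_inner t ht y hy).symm

/-- For every `t > 0`, the bivariate distribution with CDF
`F_t(x,y) = 1 − e^{−x} − (1+y)^{−t} + (1+y)^{−t}·e^{−x(1+y)^t}`, density
`f_t(x,y) = t·x·(1+y)^{t−1}·e^{−x(1+y)^t}` on `(0,∞)²`, exponential marginal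
`H(x) = 1 − e^{−x}` and Pareto marginal `G_t(y) = 1 − (1+y)^{−t}` has correlation
coefficient `r` equal to `15/4 − 6·ln 2`:
`6·∫_{(0,∞)²} (F_t(x,y) − (1 − e^{−x})·(1 − (1+y)^{−t}))·f_t(x,y) dx dy = 15/4 − 6·ln 2`.
In particular `r` is free of the parameter `t`. -/
theorem r_exponential_pareto_family
    (t : ℝ) (ht : 0 < t)
    (F f : ℝ → ℝ → ℝ)
    (hF : ∀ x y, F x y = 1 - Real.exp (-x) - (1 + y) ^ (-t)
      + (1 + y) ^ (-t) * Real.exp (-x * (1 + y) ^ t))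
    (hf : ∀ x y, f x y = t * x * (1 + y) ^ (t - 1) * Real.exp (-x * (1 + y) ^ t)) :
    6 * (∫ p in Set.Ioi (0 : ℝ) ×ˢ Set.Ioi (0 : ℝ),
        (F p.1 p.2 - (1 - Real.exp (-p.1)) * (1 - (1 + p.2) ^ (-t))) * f p.1 p.2)
      = 15 / 4 - 6 * Real.log 2 := by
  have step1 : ∫ p in Set.Ioi (0 : ℝ) ×ˢ Set.Ioi (0 : ℝ),
      (F p.1 p.2 - (1 - Real.exp (-p.1)) * (1 - (1 + p.2) ^ (-t))) * f p.1 p.2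
      = ∫ p in Set.Ioi (0 : ℝ) ×ˢ Set.Ioi (0 : ℝ), gfun t p := by
    refine setIntegral_congr_fun (measurableSet_Ioi.prod measurableSet_Ioi) fun p hp => ?_
    obtain ⟨x, y⟩ := p
    rw [hF, hf]
    have hE2 : Real.exp (-x * (1+y)^t) * Real.exp (-x * (1+y)^t)
        = Real.exp (-((2*(1+y)^t) * x)) := by
      rw [← Real.exp_add]; ring_nf
    have hEe : Real.exp (-x) * Real.exp (-x * (1+y)^t)
        = Real.exp (-(((1+y)^t+1) * x)) := by
      rw [← Real.exp_add]; ring_nf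
    dsimp only [gfun]
    linear_combination (t*x*(1+y)^(t-1)*(1+y)^(-t)) * hE2
      - (t*x*(1+y)^(t-1)*(1+y)^(-t)) * hEe
  rw [step1]
  have step2 : ∫ p in Set.Ioi (0 : ℝ) ×ˢ Set.Ioi (0 : ℝ), gfun t p
      = ∫ y in Ioi (0:ℝ), ∫ x in Ioi (0:ℝ), gfun t (x, y) := by
    rw [Measure.volume_eq_prod, ← Measure.prod_restrict]
    exact integral_prod_symm _ (gfun_integrable t ht)
  rw [step2]
  have step3 : ∫ y in Ioi (0:ℝ), ∫ x in Ioi (0:ℝ), gfun t (x, y)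
      = ∫ y in Ioi (0:ℝ), psi t y := by
    refine setIntegral_congr_fun measurableSet_Ioi fun y hy => ?_
    exact gfun_inner t ht y hy
  rw [step3, psi_integral t ht]
  ring
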